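/- Let 0 < α < 1, λ > 0, T > 0, 0 < τ_j ≤ v ≤ T for j = 1,…,n, let b_j ∈ C([0,T],ℝ) with B_j = sup|b_j|, and let g_j : ℝ → ℝ be Lipschitz with constants l_j > 0. Let ψ ∈ C([−v,0],ℝ) with ψ(0) = 0. If T^α · Σ_{j=1}^n B_j l_j < Γ(α+1), then there exists a unique x ∈ C([−v,T],ℝ) with x = ψ on [−v,0] and x(t) = ∫_0^t (t−s)^{α−1}E_{α,α}(−λ(t−s)^α) Σ_{j=1}^n b_j(s) g_j(x(s−τ_j)) ds for all t ∈ [0,T]. -/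

import Mathlib

open MeasureTheory Set intervalIntegral

/-- The two-parameter Mittag-Leffler function (real parameters). -/
noncomputable def mittagLeffler (α β z : ℝ) : ℝ :=
  ∑' n : ℕ, z ^ n / Real.Gamma (α * n + β)

namespace DelayedVoigt

lemma gamma_summable {a b R : ℝ} (ha : 0 < a) (hb : 0 < b) (hR : 0 ≤ R) :
    Summable (fun m : ℕ => R ^ m / Real.Gamma (a * m + b)) := by
  have hΓpos : ∀ m : ℕ, 0 < Real.Gamma (a * m + b) := fun m =>
    Real.Gamma_pos_of_pos (by positivity)
  set f : ℕ → ℝ := fun m => R ^ m / Real.Gamma (a * m + b) with hf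
  have hfnn : ∀ m, 0 ≤ f m := fun m => div_nonneg (pow_nonneg hR m) (hΓpos m).le
  obtain ⟨k, hk⟩ := exists_nat_ge (1 / a)
  have hak : 1 ≤ a * k := by
    rw [div_le_iff₀ ha] at hk; linarith [mul_comm a (k : ℝ)]
  have hk1 : 1 ≤ k := by
    rcases Nat.eq_zero_or_pos k with h | h
    · exfalso; rw [h] at hak; norm_num at hak
    · exact h
  set C : ℝ := max 2 ((R + 1) ^ k * 2 ^ k) with hC
  obtain ⟨n₀, hn₀⟩ := exists_nat_ge (C / a)
  have hx : ∀ m : ℕ, n₀ ≤ m → C ≤ a * m + b := by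
    intro m hm
    have h1 : C ≤ a * n₀ := by rw [div_le_iff₀ ha] at hn₀; linarith [mul_comm a (n₀ : ℝ)]
    have h2 : (n₀ : ℝ) ≤ m := Nat.cast_le.mpr hm
    nlinarith
  have step : ∀ m : ℕ, n₀ ≤ m → f (m + k) ≤ f m / 2 ^ k := by
    intro m hm
    set x : ℝ := a * m + b with hxdef
    have hΓx : 0 < Real.Gamma x := hΓpos m
    have hΓy : 0 < Real.Gamma (a * ((m + k : ℕ) : ℝ) + b) := hΓpos (m + k)
    have hx2 : (2 : ℝ) ≤ x := le_trans (le_max_left _ _) (hx m hm)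
    have hxR : (R + 1) ^ k * 2 ^ k ≤ x := le_trans (le_max_right _ _) (hx m hm)
    have h1 : x + 1 ≤ a * ((m + k : ℕ) : ℝ) + b := by push_cast; nlinarith
    have hg1 : Real.Gamma (x + 1) ≤ Real.Gamma (a * ((m + k : ℕ) : ℝ) + b) := by
      apply Real.Gamma_strictMonoOn_Ici.monotoneOn _ _ h1
      · simp only [mem_Ici]; linarith
      · simp only [mem_Ici]; linarith
    have hg2 : Real.Gamma (x + 1) = x * Real.Gamma x :=
      Real.Gamma_add_one (by positivity)
    have h5 : x * Real.Gamma x ≤ Real.Gamma (a * ((m + k : ℕ) : ℝ) + b) := hg2 ▸ hg1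
    have h6 : R ^ k * 2 ^ k ≤ x := by
      refine le_trans ?_ hxR
      have : R ^ k ≤ (R + 1) ^ k := pow_le_pow_left₀ hR (by linarith) k
      nlinarith [pow_pos (show (0:ℝ) < 2 by norm_num) k]
    show R ^ (m + k) / Real.Gamma (a * ((m + k : ℕ) : ℝ) + b) ≤ R ^ m / Real.Gamma x / 2 ^ k
    rw [div_div, div_le_div_iff₀ hΓy (by positivity)]
    calc R ^ (m + k) * (Real.Gamma x * 2 ^ k)
        = R ^ m * (R ^ k * 2 ^ k * Real.Gamma x) := by rw [pow_add]; ring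
      _ ≤ R ^ m * (x * Real.Gamma x) := by
          apply mul_le_mul_of_nonneg_left _ (pow_nonneg hR m)
          exact mul_le_mul_of_nonneg_right h6 hΓx.le
      _ ≤ R ^ m * Real.Gamma (a * ((m + k : ℕ) : ℝ) + b) :=
          mul_le_mul_of_nonneg_left h5 (pow_nonneg hR m)
  set S : ℝ := ∑ j ∈ Finset.range k, f (n₀ + j) with hS
  have hS0 : 0 ≤ S := Finset.sum_nonneg fun j _ => hfnn _
  set A : ℝ := S * 2 ^ k with hA
  have bound : ∀ m, f (n₀ + m) ≤ A / 2 ^ m := by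
    intro m
    induction m using Nat.strong_induction_on with
    | _ m ih =>
      rcases lt_or_ge m k with hmk | hmk
      · have h1 : f (n₀ + m) ≤ S :=
          Finset.single_le_sum (fun j _ => hfnn _) (Finset.mem_range.mpr hmk)
        have h2 : (2:ℝ) ^ m ≤ 2 ^ k := pow_le_pow_right₀ (by norm_num) hmk.le
        calc f (n₀ + m) ≤ S := h1
          _ ≤ S * 2 ^ k / 2 ^ m := by
              rw [le_div_iff₀ (by positivity)]
              exact mul_le_mul_of_nonneg_left h2 hS0
      · have hmpos : 0 < m := lt_of_lt_of_le hk1 hmk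
        have hlt : m - k < m := Nat.sub_lt hmpos (by omega)
        have e : n₀ + m = n₀ + (m - k) + k := by omega
        have hstep := step (n₀ + (m - k)) (by omega)
        rw [← e] at hstep
        calc f (n₀ + m) ≤ f (n₀ + (m - k)) / 2 ^ k := hstep
          _ ≤ (A / 2 ^ (m - k)) / 2 ^ k := by gcongr; exact ih _ hlt
          _ = A / 2 ^ m := by
              rw [div_div, ← pow_add]
              congr 2
              omega
  have hgeo : Summable (fun m : ℕ => A * (1 / 2 : ℝ) ^ m) := summable_geometric_two.mul_left A
  have h2 : Summable (fun m => f (n₀ + m)) := by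
    apply hgeo.of_nonneg_of_le (fun m => hfnn _)
    intro m
    refine (bound m).trans_eq ?_
    rw [div_pow, one_pow, mul_one_div]
  have h3 : Summable fun m => f (m + n₀) := by
    simpa [Nat.add_comm] using h2
  exact (summable_nat_add_iff n₀).mp h3

lemma mittagLeffler_continuous {a b : ℝ} (ha : 0 < a) (hb : 0 < b) :
    Continuous (mittagLeffler a b) := by
  rw [continuous_iff_continuousAt]
  intro z
  set R : ℝ := |z| + 1 with hR
  have hR0 : (0:ℝ) ≤ R := by positivity
  have hΓpos : ∀ m : ℕ, 0 < Real.Gamma (a * m + b) := fun m =>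
    Real.Gamma_pos_of_pos (by positivity)
  have hco : ContinuousOn (mittagLeffler a b) (Icc (-R) R) := by
    show ContinuousOn (fun z : ℝ => ∑' m : ℕ, z ^ m / Real.Gamma (a * m + b)) (Icc (-R) R)
    apply continuousOn_tsum (u := fun m : ℕ => R ^ m / Real.Gamma (a * m + b))
    · intro i
      exact ((continuous_pow i).div_const _).continuousOn
    · exact gamma_summable ha hb hR0
    · intro m w hw
      rw [Real.norm_eq_abs, abs_div, abs_pow, abs_of_pos (hΓpos m)]
      rw [div_le_div_iff_of_pos_right (hΓpos m)]
      exact pow_le_pow_left₀ (abs_nonneg w) (abs_le.mpr ⟨hw.1, hw.2⟩) m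
  apply hco.continuousAt (Icc_mem_nhds (by linarith [neg_abs_le z]) (by linarith [le_abs_self z]))



noncomputable def VKer (α lam : ℝ) (u : ℝ) : ℝ :=
  if 0 < u then u ^ (α - 1) * mittagLeffler α α (-(lam * u ^ α)) else 0

lemma mlE_continuous {α : ℝ} (lam : ℝ) (hα0 : 0 < α) :
    Continuous (fun u : ℝ => mittagLeffler α α (-(lam * u ^ α))) := by
  have h1 : Continuous (fun u : ℝ => u ^ α) := by
    rw [continuous_iff_continuousAt]
    exact fun x => Real.continuousAt_rpow_const x α (Or.inr hα0.le)
  exact (mittagLeffler_continuous hα0 hα0).comp ((continuous_const.mul h1).neg)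

lemma VKer_intervalIntegrable {α lam : ℝ} (hα0 : 0 < α) (hα1 : α < 1) :
    ∀ a c : ℝ, IntervalIntegrable (VKer α lam) volume a c := by
  have hml := mlE_continuous lam hα0
  have main : ∀ M : ℝ, 0 ≤ M → IntervalIntegrable (VKer α lam) volume 0 M := by
    intro M hM
    have h1 : IntervalIntegrable (fun u : ℝ => u ^ (α - 1)) volume 0 M :=
      intervalIntegrable_rpow' (by linarith)
    have h2 := h1.mul_continuousOn hml.continuousOn
    apply h2.congr
    intro u hu
    rw [Set.uIoc_of_le hM] at hu
    simp only [VKer, if_pos hu.1]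
  have neg : ∀ a : ℝ, a ≤ 0 → IntervalIntegrable (VKer α lam) volume a 0 := by
    intro a ha
    apply (_root_.intervalIntegrable_const (c := (0:ℝ))).congr
    intro u hu
    rw [Set.uIoc_of_le ha] at hu
    simp only [VKer, if_neg (not_lt.mpr hu.2)]
  intro a c
  have hS0 : (0:ℝ) ≤ |a| + |c| := by positivity
  have h := (neg (-(|a| + |c|)) (by linarith)).trans (main (|a| + |c|) hS0)
  apply h.mono_set
  apply Set.uIcc_subset_uIcc
  · rw [Set.uIcc_of_le (by linarith)]
    constructor
    · have := neg_abs_le a; linarith [abs_nonneg c]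
    · have := le_abs_self a; linarith [abs_nonneg c]
  · rw [Set.uIcc_of_le (by linarith)]
    constructor
    · have := neg_abs_le c; linarith [abs_nonneg a]
    · have := le_abs_self c; linarith [abs_nonneg a]

lemma volterra_continuousOn {K F : ℝ → ℝ}
    (hK : ∀ a c : ℝ, IntervalIntegrable K volume a c) (hF : Continuous F)
    {T : ℝ} (hT : 0 ≤ T) :
    ContinuousOn (fun t => ∫ s in (0:ℝ)..t, K (t - s) * F s) (Icc 0 T) := by
  have hsub : ∀ t : ℝ, (∫ s in (0:ℝ)..t, K (t - s) * F s)
      = ∫ u in (0:ℝ)..t, K u * F (t - u) := by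
    intro t
    have h1 : (∫ s in (0:ℝ)..t, K (t - s) * F s)
        = ∫ s in (0:ℝ)..t, (fun u => K u * F (t - u)) (t - s) := by
      apply intervalIntegral.integral_congr
      intro s _
      simp [sub_sub_cancel]
    rw [h1, intervalIntegral.integral_comp_sub_left (fun u => K u * F (t - u)) t,
      sub_self, sub_zero]
  simp only [hsub]
  have hJcompact : IsCompact (Icc (-1 - T) (T + 1)) := isCompact_Icc
  obtain ⟨z₀, _, hM⟩ := hJcompact.exists_isMaxOn ⟨0, by constructor <;> linarith⟩
      ((continuous_abs.comp hF).continuousOn)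
  set M := |F z₀| with hMdef
  have hM0 : (0:ℝ) ≤ M := abs_nonneg _
  have habs : ∀ a c : ℝ, IntervalIntegrable (fun u => |K u|) volume a c :=
    fun a c => (hK a c).abs
  set H : ℝ → ℝ := fun r => ∫ u in (0:ℝ)..r, |K u| with hHdef
  have hHcont : Continuous H := intervalIntegral.continuous_primitive habs 0
  have hHdiff : ∀ r r' : ℝ, H r' - H r = ∫ u in r..r', |K u| := fun r r' =>
    intervalIntegral.integral_interval_sub_left (habs 0 r') (habs 0 r)
  have hHnn : ∀ r r' : ℝ, r ≤ r' → 0 ≤ ∫ u in r..r', |K u| := fun r r' h =>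
    intervalIntegral.integral_nonneg h (fun u _ => abs_nonneg _)
  rw [Metric.continuousOn_iff]
  intro t ht ε hε
  have hHT0 : (0:ℝ) ≤ H T := hHnn 0 T hT
  have hHT1 : (0:ℝ) < H T + 1 := by linarith
  set ε₁ := ε / (2 * (H T + 1)) with hε₁
  have hε₁pos : 0 < ε₁ := by positivity
  have hUC := hJcompact.uniformContinuousOn_of_continuous hF.continuousOn
  rw [Metric.uniformContinuousOn_iff] at hUC
  obtain ⟨δ₁, hδ₁pos, hδ₁⟩ := hUC ε₁ hε₁pos
  have hHct : ContinuousAt H t := hHcont.continuousAt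
  rw [Metric.continuousAt_iff] at hHct
  obtain ⟨δ₂, hδ₂pos, hδ₂⟩ := hHct (ε / (2 * (M + 1))) (by positivity)
  refine ⟨min 1 (min δ₁ δ₂), by positivity, ?_⟩
  intro t' ht' hdist
  have hd1 : |t' - t| < 1 := by
    rw [Real.dist_eq] at hdist
    exact lt_of_lt_of_le hdist (min_le_left _ _)
  have hdδ₁ : |t' - t| < δ₁ := by
    rw [Real.dist_eq] at hdist
    exact lt_of_lt_of_le hdist ((min_le_right _ _).trans (min_le_left _ _))
  have hdδ₂ : dist t' t < δ₂ :=
    lt_of_lt_of_le hdist ((min_le_right _ _).trans (min_le_right _ _))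
  have hFc : ∀ r : ℝ, Continuous (fun u : ℝ => F (r - u)) := fun r =>
    hF.comp (continuous_const.sub continuous_id)
  have h1 : IntervalIntegrable (fun u => K u * F (t' - u)) volume 0 t :=
    (hK 0 t).mul_continuousOn (hFc t').continuousOn
  have h2 : IntervalIntegrable (fun u => K u * F (t - u)) volume 0 t :=
    (hK 0 t).mul_continuousOn (hFc t).continuousOn
  have h3 : IntervalIntegrable (fun u => K u * F (t' - u)) volume t t' :=
    (hK t t').mul_continuousOn (hFc t').continuousOn
  have hsplit : (∫ u in (0:ℝ)..t', K u * F (t' - u))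
      = (∫ u in (0:ℝ)..t, K u * F (t' - u)) + ∫ u in t..t', K u * F (t' - u) :=
    (intervalIntegral.integral_add_adjacent_intervals h1 h3).symm
  have hdiff : (∫ u in (0:ℝ)..t, K u * F (t' - u)) - (∫ u in (0:ℝ)..t, K u * F (t - u))
      = ∫ u in (0:ℝ)..t, K u * (F (t' - u) - F (t - u)) := by
    rw [← intervalIntegral.integral_sub h1 h2]
    apply intervalIntegral.integral_congr
    intro u _
    ring
  have hA : |∫ u in (0:ℝ)..t, K u * (F (t' - u) - F (t - u))| ≤ ε₁ * H t := by
    have hb : ∀ᵐ u ∂volume.restrict (Set.uIoc (0:ℝ) t),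
        ‖K u * (F (t' - u) - F (t - u))‖ ≤ ε₁ * |K u| := by
      refine (ae_restrict_mem measurableSet_uIoc).mono ?_
      intro u hu
      rw [Set.uIoc_of_le ht.1] at hu
      have habs1 := abs_lt.mp hd1
      have h₂ : t - u ∈ Icc (-1 - T) (T + 1) :=
        ⟨by linarith [hu.2, ht.2], by linarith [hu.1, ht.2]⟩
      have h₁ : t' - u ∈ Icc (-1 - T) (T + 1) :=
        ⟨by linarith [hu.2], by linarith [hu.1, ht'.2]⟩
      have hdd : dist (t' - u) (t - u) < δ₁ := by
        rw [Real.dist_eq]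
        have : t' - u - (t - u) = t' - t := by ring
        rwa [this]
      have hF1 := hδ₁ _ h₁ _ h₂ hdd
      rw [Real.dist_eq] at hF1
      rw [Real.norm_eq_abs, abs_mul]
      calc |K u| * |F (t' - u) - F (t - u)| ≤ |K u| * ε₁ :=
            mul_le_mul_of_nonneg_left hF1.le (abs_nonneg _)
        _ = ε₁ * |K u| := mul_comm _ _
    have h4 := intervalIntegral.norm_integral_le_abs_of_norm_le hb ((habs 0 t).const_mul ε₁)
    rw [Real.norm_eq_abs] at h4
    have hHtnn : 0 ≤ H t := hHnn 0 t ht.1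
    calc |∫ u in (0:ℝ)..t, K u * (F (t' - u) - F (t - u))|
        ≤ abs (∫ u in (0:ℝ)..t, ε₁ * |K u|) := h4
      _ = ε₁ * H t := by
          rw [intervalIntegral.integral_const_mul]
          exact abs_of_nonneg (mul_nonneg hε₁pos.le hHtnn)
  have hHtT : H t ≤ H T := by
    have h5 := hHdiff t T
    have h6 := hHnn t T ht.2
    linarith
  have hA2 : |∫ u in (0:ℝ)..t, K u * (F (t' - u) - F (t - u))| < ε / 2 := by
    have : ε₁ * H t ≤ ε₁ * H T := mul_le_mul_of_nonneg_left hHtT hε₁pos.le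
    have hfin : ε₁ * H T < ε / 2 := by
      rw [hε₁, div_mul_eq_mul_div, div_lt_div_iff₀ (by positivity) (by norm_num)]
      nlinarith
    linarith [hA]
  have hB : |∫ u in t..t', K u * F (t' - u)| ≤ M * |H t' - H t| := by
    have hb : ∀ᵐ u ∂volume.restrict (Set.uIoc t t'), ‖K u * F (t' - u)‖ ≤ M * |K u| := by
      refine (ae_restrict_mem measurableSet_uIoc).mono ?_
      intro u hu
      have hu1 : min t t' < u := hu.1
      have hu2 : u ≤ max t t' := hu.2
      have hmin : (0:ℝ) ≤ min t t' := le_min ht.1 ht'.1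
      have habs1 := abs_lt.mp hd1
      have h₁ : t' - u ∈ Icc (-1 - T) (T + 1) := by
        constructor
        · rcases le_total t t' with h | h
          · rw [max_eq_right h] at hu2; linarith
          · rw [max_eq_left h] at hu2; linarith
        · linarith [ht'.2]
      rw [Real.norm_eq_abs, abs_mul]
      calc |K u| * |F (t' - u)| ≤ |K u| * M :=
            mul_le_mul_of_nonneg_left (hM h₁) (abs_nonneg _)
        _ = M * |K u| := mul_comm _ _
    have h4 := intervalIntegral.norm_integral_le_abs_of_norm_le hb ((habs t t').const_mul M)
    rw [Real.norm_eq_abs] at h4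
    calc |∫ u in t..t', K u * F (t' - u)| ≤ abs (∫ u in t..t', M * |K u|) := h4
      _ = M * |H t' - H t| := by
          rw [intervalIntegral.integral_const_mul, ← hHdiff t t', abs_mul, abs_of_nonneg hM0]
  have hB2 : |∫ u in t..t', K u * F (t' - u)| < ε / 2 := by
    have hd : |H t' - H t| < ε / (2 * (M + 1)) := by
      have := hδ₂ hdδ₂
      rwa [Real.dist_eq] at this
    have h5 : M * |H t' - H t| ≤ M * (ε / (2 * (M + 1))) :=
      mul_le_mul_of_nonneg_left hd.le hM0
    have h6 : M * (ε / (2 * (M + 1))) < ε / 2 := by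
      rw [mul_div_assoc', div_lt_div_iff₀ (by positivity) (by norm_num)]
      nlinarith
    linarith [hB]
  rw [Real.dist_eq]
  have hXY : (∫ u in (0:ℝ)..t', K u * F (t' - u)) - (∫ u in (0:ℝ)..t, K u * F (t - u))
      = (∫ u in (0:ℝ)..t, K u * (F (t' - u) - F (t - u)))
        + ∫ u in t..t', K u * F (t' - u) := by
    rw [hsplit, ← hdiff]
    ring
  rw [hXY]
  calc |(∫ u in (0:ℝ)..t, K u * (F (t' - u) - F (t - u)))
        + ∫ u in t..t', K u * F (t' - u)|
      ≤ |∫ u in (0:ℝ)..t, K u * (F (t' - u) - F (t - u))|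
        + |∫ u in t..t', K u * F (t' - u)| := abs_add_le _ _
    _ < ε := by linarith

noncomputable def VoigtStep (α lam T : ℝ) {n : ℕ} (τ : Fin n → ℝ) (bt : Fin n → ℝ → ℝ)
    (g : Fin n → ℝ → ℝ) (ψc : ℝ → ℝ) (y : ℝ → ℝ) : ℝ → ℝ := fun t =>
  if t ≤ 0 then ψc t
  else ∫ s in (0:ℝ)..(min t T), VKer α lam (min t T - s) * ∑ j, bt j s * g j (y (s - τ j))

noncomputable def VoigtSeq (α lam T : ℝ) {n : ℕ} (τ : Fin n → ℝ) (bt : Fin n → ℝ → ℝ)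
    (g : Fin n → ℝ → ℝ) (ψc : ℝ → ℝ) : ℕ → ℝ → ℝ :=
  fun k => Nat.rec ψc (fun _ y => VoigtStep α lam T τ bt g ψc y) k

lemma voigtStep_continuous {α lam T : ℝ} {n : ℕ} (hα0 : 0 < α) (hα1 : α < 1) (hT : 0 < T)
    {τ : Fin n → ℝ} {bt : Fin n → ℝ → ℝ} (hbt : ∀ j, Continuous (bt j))
    {g : Fin n → ℝ → ℝ} (hg : ∀ j, Continuous (g j))
    {ψc : ℝ → ℝ} (hψc : Continuous ψc) (hψc0 : ψc 0 = 0)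
    {y : ℝ → ℝ} (hy : Continuous y) :
    Continuous (VoigtStep α lam T τ bt g ψc y) := by
  classical
  have hF : Continuous (fun s => ∑ j, bt j s * g j (y (s - τ j))) := by
    apply continuous_finset_sum
    intro j _
    exact (hbt j).mul ((hg j).comp (hy.comp (continuous_id.sub continuous_const)))
  have hΦ : ContinuousOn
      (fun t => ∫ s in (0:ℝ)..t, VKer α lam (t - s) * ∑ j, bt j s * g j (y (s - τ j)))
      (Icc 0 T) :=
    volterra_continuousOn (VKer_intervalIntegrable hα0 hα1) hF hT.le
  have hΦ' : ContinuousOn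
      (fun t => ∫ s in (0:ℝ)..(min t T),
        VKer α lam (min t T - s) * ∑ j, bt j s * g j (y (s - τ j)))
      {x : ℝ | (0:ℝ) ≤ x} := by
    apply hΦ.comp ((continuous_id.min continuous_const).continuousOn)
    intro x hx
    exact ⟨le_min hx hT.le, min_le_right _ _⟩
  unfold VoigtStep
  apply continuous_if_le continuous_id continuous_const hψc.continuousOn hΦ'
  intro x hx
  have hx0 : x = 0 := hx
  subst hx0
  rw [hψc0, min_eq_left hT.le, intervalIntegral.integral_same]

end DelayedVoigt

open DelayedVoigt

/-- Existence and uniqueness of a solution of the delayed fractional Voigt model,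
in mild (Volterra) form, under the contraction condition
`T^α Σ B_j l_j < Γ(α+1)`. -/
theorem delayed_fractional_existence_uniqueness
    (α lam T v : ℝ) (n : ℕ)
    (hα0 : 0 < α) (hα1 : α < 1) (hlam : 0 < lam) (hT : 0 < T)
    (hv0 : 0 < v) (hvT : v ≤ T)
    (τ : Fin n → ℝ) (hτ : ∀ j, 0 < τ j ∧ τ j ≤ v)
    (b : Fin n → ℝ → ℝ) (hb : ∀ j, ContinuousOn (b j) (Set.Icc 0 T))
    (B : Fin n → ℝ) (hB : ∀ j, ∀ t ∈ Set.Icc (0 : ℝ) T, |b j t| ≤ B j)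
    (g : Fin n → ℝ → ℝ) (l : Fin n → ℝ) (hl : ∀ j, 0 < l j)
    (hg : ∀ j, ∀ x y : ℝ, |g j x - g j y| ≤ l j * |x - y|)
    (ψ : ℝ → ℝ) (hψ : ContinuousOn ψ (Set.Icc (-v) 0)) (hψ0 : ψ 0 = 0)
    (hcontr : T ^ α * ∑ j, B j * l j < Real.Gamma (α + 1)) :
    ∃ x : ℝ → ℝ,
      (ContinuousOn x (Set.Icc (-v) T) ∧
        (∀ t ∈ Set.Icc (-v) (0 : ℝ), x t = ψ t) ∧
        (∀ t ∈ Set.Icc (0 : ℝ) T,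
          x t = ∫ s in (0 : ℝ)..t,
            (t - s) ^ (α - 1) * mittagLeffler α α (-(lam * (t - s) ^ α)) *
              ∑ j, b j s * g j (x (s - τ j)))) ∧
      ∀ y : ℝ → ℝ,
        (ContinuousOn y (Set.Icc (-v) T) ∧
          (∀ t ∈ Set.Icc (-v) (0 : ℝ), y t = ψ t) ∧
          (∀ t ∈ Set.Icc (0 : ℝ) T,
            y t = ∫ s in (0 : ℝ)..t,
              (t - s) ^ (α - 1) * mittagLeffler α α (-(lam * (t - s) ^ α)) *
                ∑ j, b j s * g j (y (s - τ j)))) →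
        ∀ t ∈ Set.Icc (-v) T, y t = x t := by
  classical
  -- clamped history and coefficients
  set ψc : ℝ → ℝ := fun t => ψ (max (-v) (min t 0)) with hψcdef
  set bt : Fin n → ℝ → ℝ := fun j s => b j (max 0 (min s T)) with hbtdef
  have hclamp1 : Continuous (fun t : ℝ => max (-v) (min t 0)) :=
    continuous_const.max (continuous_id.min continuous_const)
  have hψc_cont : Continuous ψc := by
    rw [hψcdef]
    exact hψ.comp_continuous hclamp1 (fun t =>
      ⟨le_max_left _ _, max_le (by linarith) (min_le_right _ _)⟩)
  have hψc0 : ψc 0 = 0 := by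
    rw [hψcdef]
    simp only [min_self]
    rw [max_eq_right (by linarith : -v ≤ (0:ℝ))]
    exact hψ0
  have hψc_eq : ∀ t ∈ Set.Icc (-v) (0:ℝ), ψc t = ψ t := by
    intro t ht
    rw [hψcdef]
    simp only []
    rw [min_eq_left ht.2, max_eq_right ht.1]
  have hbt_cont : ∀ j, Continuous (bt j) := by
    intro j
    rw [hbtdef]
    exact (hb j).comp_continuous
      (continuous_const.max (continuous_id.min continuous_const))
      (fun s => ⟨le_max_left _ _, max_le hT.le (min_le_right _ _)⟩)
  have hbt_eq : ∀ j, ∀ s ∈ Set.Icc (0:ℝ) T, bt j s = b j s := by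
    intro j s hs
    rw [hbtdef]
    simp only []
    rw [min_eq_left hs.2, max_eq_right hs.1]
  have hg_cont : ∀ j, Continuous (g j) := by
    intro j
    have hlip : LipschitzWith (Real.toNNReal (l j)) (g j) := by
      apply LipschitzWith.of_dist_le_mul
      intro x y
      rw [Real.dist_eq, Real.dist_eq, Real.coe_toNNReal _ (hl j).le]
      exact hg j x y
    exact hlip.continuous
  -- minimal delay
  set Sd : Finset ℝ := insert v (Finset.image τ Finset.univ) with hSd
  have hSne : Sd.Nonempty := ⟨v, Finset.mem_insert_self _ _⟩
  set d : ℝ := Sd.inf' hSne id with hd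
  have hd_le_v : d ≤ v := Finset.inf'_le id (Finset.mem_insert_self _ _)
  have hd_le_τ : ∀ j, d ≤ τ j := fun j =>
    Finset.inf'_le id (Finset.mem_insert_of_mem
      (Finset.mem_image_of_mem τ (Finset.mem_univ j)))
  have hd_pos : 0 < d := by
    rw [hd, Finset.lt_inf'_iff]
    intro x hx
    rcases Finset.mem_insert.mp hx with h | h
    · rw [h]; exact hv0
    · obtain ⟨j, _, rfl⟩ := Finset.mem_image.mp h
      exact (hτ j).1
  -- the iteration
  set xs : ℕ → ℝ → ℝ := VoigtSeq α lam T τ bt g ψc with hxs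
  have xs_zero : xs 0 = ψc := rfl
  have xs_succ : ∀ k, xs (k + 1) = VoigtStep α lam T τ bt g ψc (xs k) := fun k => rfl
  have hxs_cont : ∀ k, Continuous (xs k) := by
    intro k
    induction k with
    | zero => rw [xs_zero]; exact hψc_cont
    | succ k ih =>
        rw [xs_succ]
        exact voigtStep_continuous hα0 hα1 hT hbt_cont hg_cont hψc_cont hψc0 ih
  have xs_neg : ∀ k (t : ℝ), t ≤ 0 → xs k t = ψc t := by
    intro k t ht
    cases k with
    | zero => rw [xs_zero]
    | succ k => rw [xs_succ]; unfold VoigtStep; rw [if_pos ht]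
  have step_pos' : ∀ (y : ℝ → ℝ) (t : ℝ), 0 < t →
      VoigtStep α lam T τ bt g ψc y t
        = ∫ s in (0:ℝ)..(min t T),
            VKer α lam (min t T - s) * ∑ j, bt j s * g j (y (s - τ j)) := by
    intro y t ht
    unfold VoigtStep
    rw [if_neg (not_le.mpr ht)]
  have step_pos : ∀ (y : ℝ → ℝ) (t : ℝ), 0 < t → t ≤ T →
      VoigtStep α lam T τ bt g ψc y t
        = ∫ s in (0:ℝ)..t, VKer α lam (t - s) * ∑ j, bt j s * g j (y (s - τ j)) := by
    intro y t ht htT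
    unfold VoigtStep
    rw [if_neg (not_le.mpr ht), min_eq_left htT]
  -- consecutive iterates agree up to time k * d
  have claim2 : ∀ (k : ℕ) (t : ℝ), t ≤ (k : ℝ) * d → xs (k + 1) t = xs k t := by
    intro k
    induction k with
    | zero =>
        intro t ht
        rw [Nat.cast_zero, zero_mul] at ht
        rw [xs_neg (0 + 1) t ht, xs_neg 0 t ht]
    | succ k ih =>
        intro t ht
        rcases le_or_gt t 0 with h0 | h0
        · rw [xs_neg _ _ h0, xs_neg _ _ h0]
        · rw [show xs (k + 1) t = ∫ s in (0:ℝ)..(min t T),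
              VKer α lam (min t T - s) * ∑ j, bt j s * g j (xs k (s - τ j)) from by
                rw [xs_succ k]; exact step_pos' (xs k) t h0]
          rw [xs_succ (k + 1), step_pos' (xs (k + 1)) t h0]
          apply intervalIntegral.integral_congr
          intro s hs
          beta_reduce
          rw [Set.uIcc_of_le (le_min h0.le hT.le)] at hs
          congr 1
          apply Finset.sum_congr rfl
          intro j _
          congr 1
          apply congrArg
          apply ih
          push_cast at ht
          have h1 : s ≤ min t T := hs.2
          have h2 : min t T ≤ t := min_le_left _ _
          have h3 := hd_le_τ j
          linarith
  -- the horizon index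
  obtain ⟨N, hN⟩ := exists_nat_ge (T / d)
  have hTNd : T ≤ (N : ℝ) * d := by
    rw [div_le_iff₀ hd_pos] at hN
    linarith
  have hN0 : 0 < N := by
    by_contra h
    push_neg at h
    interval_cases N
    simp only [Nat.cast_zero, zero_mul] at hTNd
    linarith
  obtain ⟨M, rfl⟩ : ∃ M, N = M + 1 := ⟨N - 1, by omega⟩
  -- properties of x := xs (M+1)
  have hx1 : ContinuousOn (xs (M + 1)) (Set.Icc (-v) T) := (hxs_cont _).continuousOn
  have hx2 : ∀ t ∈ Set.Icc (-v) (0:ℝ), xs (M + 1) t = ψ t := fun t ht =>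
    (xs_neg _ t ht.2).trans (hψc_eq t ht)
  have hx3 : ∀ t ∈ Set.Icc (0:ℝ) T,
      xs (M + 1) t = ∫ s in (0 : ℝ)..t,
        (t - s) ^ (α - 1) * mittagLeffler α α (-(lam * (t - s) ^ α)) *
          ∑ j, b j s * g j (xs (M + 1) (s - τ j)) := by
    intro t ht
    rcases eq_or_lt_of_le ht.1 with h0 | h0
    · rw [← h0, intervalIntegral.integral_same, xs_neg _ 0 le_rfl, hψc0]
    · rw [xs_succ M, step_pos (xs M) t h0 ht.2]
      apply intervalIntegral.integral_congr
      intro s hs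
      beta_reduce
      rw [Set.uIcc_of_le h0.le] at hs
      rcases eq_or_lt_of_le hs.2 with hst | hst
      · rw [hst]
        simp [VKer, Real.zero_rpow (show α - 1 ≠ 0 by linarith)]
      · have hts : (0:ℝ) < t - s := by linarith
        show VKer α lam (t - s) * _ = _
        rw [VKer, if_pos hts]
        congr 1
        apply Finset.sum_congr rfl
        intro j _
        rw [hbt_eq j s ⟨hs.1, le_trans hs.2 ht.2⟩]
        congr 1
        apply congrArg
        symm
        apply claim2 M
        have h3 := hd_le_τ j
        push_cast
        push_cast at hTNd
        linarith [ht.2]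
  refine ⟨xs (M + 1), ⟨hx1, hx2, hx3⟩, ?_⟩
  rintro y ⟨hycont, hyinit, hyeq⟩
  have main : ∀ (k : ℕ), ∀ t ∈ Set.Icc (-v) T, t ≤ (k : ℝ) * d → y t = xs (M + 1) t := by
    intro k
    induction k with
    | zero =>
        intro t ht h0
        rw [Nat.cast_zero, zero_mul] at h0
        rw [hyinit t ⟨ht.1, h0⟩, hx2 t ⟨ht.1, h0⟩]
    | succ k ih =>
        intro t ht h0'
        rcases le_or_gt t 0 with h0 | h0
        · rw [hyinit t ⟨ht.1, h0⟩, hx2 t ⟨ht.1, h0⟩]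
        · rw [hyeq t ⟨h0.le, ht.2⟩, hx3 t ⟨h0.le, ht.2⟩]
          apply intervalIntegral.integral_congr
          intro s hs
          beta_reduce
          rw [Set.uIcc_of_le h0.le] at hs
          congr 1
          apply Finset.sum_congr rfl
          intro j _
          congr 1
          apply congrArg
          apply ih
          · constructor
            · linarith [(hτ j).2, hs.1]
            · linarith [(hτ j).1, hs.2, ht.2]
          · push_cast at h0'
            have h3 := hd_le_τ j
            linarith [hs.2]
  intro t ht
  refine main (M + 1) t ht (le_trans ht.2 ?_)
  push_cast
  push_cast at hTNd
  linarith
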